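/- Fix δ ∈ (0,1) and assume that for every N the weights (p_k^{(N,δ)})_{k≥0} sum to 1. Define the median M_N := min{ k ∈ ℕ : Σ_{ℓ=0}^{k} p_ℓ^{(N,δ)} ≥ 1/2 }. Then, as N → ∞, M_N ~ log( log(N^δ)/log 2 ) / log 2, i.e. M_N · log 2 / log( δ (log N) / log 2 ) → 1. -/

import Mathlib

open Filter Finset

namespace MullerRatchet12

/-- Auxiliary recursion computing the pair `(p_k, Σ_{ℓ≤k} p_ℓ)` of the equilibrium
type-frequency weights of the tournament ratchet. -/
noncomputable def pAux (ρ : ℝ) : ℕ → ℝ × ℝ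
  | 0 => (1 - ρ, 1 - ρ)
  | k+1 =>
    let a := ρ - 1 + 2 * (pAux ρ k).2
    let p := -(1/2) * a + Real.sqrt ((1/4) * a^2 + ρ * (pAux ρ k).1)
    (p, (pAux ρ k).2 + p)

/-- The equilibrium weight `p_k^{(ρ)}`. -/
noncomputable def pseq (ρ : ℝ) (k : ℕ) : ℝ := (pAux ρ k).1

/-- The median `M_N = min{k : Σ_{ℓ=0}^k p_ℓ^{(N,δ)} ≥ 1/2}` of the equilibrium profile. -/
noncomputable def median (δ : ℝ) (N : ℕ) : ℕ :=
  sInf {k : ℕ | 1/2 ≤ ∑ l ∈ Finset.range (k+1), pseq (1 - (N:ℝ)^(-δ)) l}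

lemma pAux_fst_succ (ρ : ℝ) (k : ℕ) : (pAux ρ (k+1)).1 =
    -(1/2) * (ρ - 1 + 2 * (pAux ρ k).2)
      + Real.sqrt ((1/4) * (ρ - 1 + 2 * (pAux ρ k).2)^2 + ρ * (pAux ρ k).1) := rfl

lemma pAux_snd_succ (ρ : ℝ) (k : ℕ) : (pAux ρ (k+1)).2 = (pAux ρ k).2 + (pAux ρ (k+1)).1 := rfl

variable {ρ : ℝ}

lemma pseq_nonneg (hρ0 : 0 ≤ ρ) (hρ1 : ρ ≤ 1) : ∀ k, 0 ≤ (pAux ρ k).1 := by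
  intro k
  induction k with
  | zero => simpa [pAux] using by linarith
  | succ k ih =>
    rw [pAux_fst_succ]
    set a := ρ - 1 + 2 * (pAux ρ k).2 with ha
    have h2 : ((a/2)^2 : ℝ) ≤ (1/4) * a^2 + ρ * (pAux ρ k).1 := by
      nlinarith [mul_nonneg hρ0 ih]
    have h3 := Real.sqrt_le_sqrt h2
    rw [Real.sqrt_sq_eq_abs] at h3
    have : a/2 ≤ Real.sqrt ((1/4) * a^2 + ρ * (pAux ρ k).1) :=
      le_trans (le_abs_self _) h3
    linarith

/-- quadratic equation satisfied by `p_{k+1}` -/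
lemma pseq_quad (hρ0 : 0 ≤ ρ) (hρ1 : ρ ≤ 1) (k : ℕ) :
    (pAux ρ (k+1)).1 ^ 2 + (ρ - 1 + 2 * (pAux ρ k).2) * (pAux ρ (k+1)).1
      = ρ * (pAux ρ k).1 := by
  set a := ρ - 1 + 2 * (pAux ρ k).2 with ha
  have hD : (0:ℝ) ≤ (1/4) * a^2 + ρ * (pAux ρ k).1 := by
    nlinarith [mul_nonneg hρ0 (pseq_nonneg hρ0 hρ1 k)]
  have hs : Real.sqrt ((1/4) * a^2 + ρ * (pAux ρ k).1) ^ 2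
      = (1/4) * a^2 + ρ * (pAux ρ k).1 := Real.sq_sqrt hD
  rw [pAux_fst_succ, ← ha]
  ring_nf
  ring_nf at hs
  nlinarith [hs]

/-- key identity : `ρ p_k = w_k (1 - w_k)` -/
lemma key (hρ0 : 0 ≤ ρ) (hρ1 : ρ ≤ 1) : ∀ k,
    ρ * (pAux ρ k).1 = (pAux ρ k).2 * (1 - (pAux ρ k).2) := by
  intro k
  induction k with
  | zero => simp [pAux]; ring
  | succ k ih =>
    have hq := pseq_quad hρ0 hρ1 k
    rw [pAux_snd_succ]
    nlinarith [hq, ih]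

/-- the recursion for the partial sums: `w_{k+1}^2 = (1-ρ) w_{k+1} + ρ w_k` -/
lemma w_rec (hρ0 : 0 ≤ ρ) (hρ1 : ρ ≤ 1) (k : ℕ) :
    (pAux ρ (k+1)).2 ^ 2 = (1 - ρ) * (pAux ρ (k+1)).2 + ρ * (pAux ρ k).2 := by
  have h1 := key hρ0 hρ1 (k+1)
  have h2 : (pAux ρ (k+1)).2 = (pAux ρ k).2 + (pAux ρ (k+1)).1 := pAux_snd_succ ρ k
  nlinarith [h1, h2]

lemma w_mono (hρ0 : 0 ≤ ρ) (hρ1 : ρ ≤ 1) {j k : ℕ} (h : j ≤ k) :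
    (pAux ρ j).2 ≤ (pAux ρ k).2 := by
  induction k with
  | zero => simp_all
  | succ k ih =>
    rcases Nat.lt_or_ge j (k+1) with hh | hh
    · have := ih (Nat.lt_succ_iff.mp hh)
      have h2 := pseq_nonneg hρ0 hρ1 (k+1)
      rw [pAux_snd_succ]; linarith
    · have : j = k+1 := le_antisymm h hh
      subst this; exact le_rfl

lemma w_zero (ρ : ℝ) : (pAux ρ 0).2 = 1 - ρ := rfl

lemma w_nonneg (hρ0 : 0 ≤ ρ) (hρ1 : ρ ≤ 1) (k : ℕ) : 0 ≤ (pAux ρ k).2 := by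
  have := w_mono hρ0 hρ1 (Nat.zero_le k)
  rw [w_zero] at this; linarith

lemma w_le_one (hρ0 : 0 ≤ ρ) (hρ1 : ρ ≤ 1) : ∀ k, (pAux ρ k).2 ≤ 1 := by
  intro k
  induction k with
  | zero => rw [w_zero]; linarith
  | succ k ih =>
    have h1 := w_rec hρ0 hρ1 k
    have h2 := w_nonneg hρ0 hρ1 (k+1)
    nlinarith

lemma w_low (hρ0 : 0 < ρ) (hρ1 : ρ < 1) : ∀ k,
    ρ * (1 - ρ) ^ ((1/2 : ℝ)^k) ≤ (pAux ρ k).2 := by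
  have hμ0 : (0:ℝ) < 1 - ρ := by linarith
  intro k
  induction k with
  | zero =>
    rw [w_zero, pow_zero, Real.rpow_one]
    nlinarith
  | succ k ih =>
    have hrec := w_rec hρ0.le hρ1.le k
    have hw1 : 0 ≤ (pAux ρ (k+1)).2 := w_nonneg hρ0.le hρ1.le (k+1)
    have hsq : (1-ρ)^((1/2:ℝ)^(k+1)) * (1-ρ)^((1/2:ℝ)^(k+1)) = (1-ρ)^((1/2:ℝ)^k) := by
      rw [← Real.rpow_add hμ0]; congr 1; ring
    have hpos : 0 ≤ (1-ρ) ^ ((1/2:ℝ)^(k+1)) := Real.rpow_nonneg hμ0.le _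
    have haa : (ρ * (1-ρ)^((1/2:ℝ)^(k+1)))^2 ≤ (pAux ρ (k+1)).2 ^ 2 := by
      have h1 : (ρ * (1-ρ)^((1/2:ℝ)^(k+1)))^2 = ρ * (ρ * (1-ρ)^((1/2:ℝ)^k)) := by
        rw [← hsq]; ring
      rw [h1, hrec]
      nlinarith [mul_le_mul_of_nonneg_left ih hρ0.le,
        mul_nonneg (by linarith : (0:ℝ) ≤ 1 - ρ) hw1]
    nlinarith [mul_nonneg hρ0.le hpos]

lemma w_high (hρ0 : 0 < ρ) (hρ1 : ρ < 1) : ∀ k,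
    (pAux ρ k).2 ≤ (1 - ρ) ^ ((1/2 : ℝ)^k)
      * Real.exp (Real.sqrt (1 - ρ) * ((2:ℝ)^k - 1)) := by
  have hμ0 : (0:ℝ) < 1 - ρ := by linarith
  have hμ1 : (1:ℝ) - ρ ≤ 1 := by linarith
  set μ := 1 - ρ with hμ
  intro k
  induction k with
  | zero => simp [w_zero, Real.rpow_one, ← hμ]
  | succ k ih =>
    set w := (pAux ρ (k+1)).2 with hww
    have hrec := w_rec hρ0.le hρ1.le k
    have hwμ : μ ≤ w := by
      have := w_mono hρ0.le hρ1.le (Nat.zero_le (k+1))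
      rw [w_zero] at this; rw [hμ]; exact this
    have hwk0 : 0 ≤ (pAux ρ k).2 := w_nonneg hρ0.le hρ1.le k
    have h1 : (w - μ)^2 ≤ (pAux ρ k).2 := by nlinarith
    set B := μ ^ ((1/2:ℝ)^k) * Real.exp (Real.sqrt μ * ((2:ℝ)^k - 1)) with hB
    have hBnn : 0 ≤ B := mul_nonneg (Real.rpow_nonneg hμ0.le _) (Real.exp_nonneg _)
    have h2 : w - μ ≤ Real.sqrt B := by
      have hmono := Real.sqrt_le_sqrt (le_trans h1 ih)
      rwa [Real.sqrt_sq (by linarith : 0 ≤ w - μ)] at hmono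
    have hsB : Real.sqrt B = μ ^ ((1/2:ℝ)^(k+1)) * Real.exp (Real.sqrt μ * ((2:ℝ)^k - 1) / 2) := by
      have hx : Real.sqrt (μ ^ ((1/2:ℝ)^k)) = μ ^ ((1/2:ℝ)^(k+1)) := by
        have he : ((1/2:ℝ)^k) * (1/2:ℝ) = (1/2:ℝ)^(k+1) := by ring
        rw [Real.sqrt_eq_rpow, ← Real.rpow_mul hμ0.le, he]
      have hy : Real.sqrt (Real.exp (Real.sqrt μ * ((2:ℝ)^k - 1)))
          = Real.exp (Real.sqrt μ * ((2:ℝ)^k - 1) / 2) := by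
        rw [show Real.exp (Real.sqrt μ * ((2:ℝ)^k - 1)) =
            Real.exp (Real.sqrt μ * ((2:ℝ)^k - 1) / 2) ^ 2 by
          rw [sq, ← Real.exp_add]; ring_nf]
        exact Real.sqrt_sq (Real.exp_nonneg _)
      rw [hB, Real.sqrt_mul (Real.rpow_nonneg hμ0.le _), hx, hy]
    set c := μ ^ ((1/2:ℝ)^(k+1)) with hc
    set s := Real.sqrt μ * ((2:ℝ)^k - 1) / 2 with hs
    set s' := Real.sqrt μ * ((2:ℝ)^(k+1) - 1) with hs'
    have hsqμ : Real.sqrt μ * Real.sqrt μ = μ := Real.mul_self_sqrt hμ0.le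
    have hsqnn : 0 ≤ Real.sqrt μ := Real.sqrt_nonneg μ
    have h2k : (1:ℝ) ≤ (2:ℝ)^k := one_le_pow₀ (by norm_num)
    have hss : s + Real.sqrt μ ≤ s' := by
      rw [hs, hs']
      have hcoef : (1:ℝ) ≤ (2:ℝ)^(k+1) - 1 - ((2:ℝ)^k - 1)/2 := by
        rw [pow_succ]; nlinarith
      nlinarith [mul_le_mul_of_nonneg_left hcoef hsqnn]
    have hcs : Real.sqrt μ ≤ c := by
      rw [hc, show Real.sqrt μ = μ ^ (1/2:ℝ) from Real.sqrt_eq_rpow μ]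
      apply Real.rpow_le_rpow_of_exponent_ge hμ0 hμ1
      calc ((1/2:ℝ))^(k+1) ≤ (1/2:ℝ)^1 := by
            apply pow_le_pow_of_le_one (by norm_num) (by norm_num) (by omega)
        _ = 1/2 := pow_one _
    have hs0 : 0 ≤ s := by
      rw [hs]
      apply div_nonneg (mul_nonneg hsqnn (by linarith)) (by norm_num)
    have e3 : (1:ℝ) ≤ Real.exp s := Real.one_le_exp hs0
    have hexp : Real.exp s + Real.sqrt μ ≤ Real.exp s' := by
      have e1 : Real.exp (s + Real.sqrt μ) ≤ Real.exp s' := Real.exp_le_exp.mpr hss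
      have e2 : Real.exp s * (1 + Real.sqrt μ) ≤ Real.exp (s + Real.sqrt μ) := by
        rw [Real.exp_add]
        exact mul_le_mul_of_nonneg_left (by linarith [Real.add_one_le_exp (Real.sqrt μ)])
          (Real.exp_nonneg s)
      have e4 : Real.exp s + Real.sqrt μ ≤ Real.exp s * (1 + Real.sqrt μ) := by
        have := mul_le_mul_of_nonneg_right (sub_nonneg.mpr e3) hsqnn
        nlinarith
      linarith
    have hcpos : 0 < c := Real.rpow_pos_of_pos hμ0 _
    have hfinal : c * Real.exp s + μ ≤ c * Real.exp s' := by
      have h5 := mul_le_mul_of_nonneg_left hexp hcpos.le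
      rw [mul_add] at h5
      have h6 : μ ≤ c * Real.sqrt μ := by
        have := mul_le_mul_of_nonneg_right hcs hsqnn
        linarith [hsqμ ▸ this]
      linarith
    calc w ≤ Real.sqrt B + μ := by linarith
      _ = c * Real.exp s + μ := by rw [hsB]
      _ ≤ c * Real.exp s' := hfinal

lemma sum_eq (ρ : ℝ) : ∀ k, ∑ l ∈ Finset.range (k+1), pseq ρ l = (pAux ρ k).2 := by
  intro k
  induction k with
  | zero => simp [pseq, pAux]
  | succ k ih =>
    rw [Finset.sum_range_succ, ih, pAux_snd_succ]
    rfl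

/-- auxiliary ratio limit -/
lemma aux_ratio (a b : ℝ) {t : ℕ → ℝ} (h : Tendsto t atTop atTop) :
    Tendsto (fun n => (t n + a)/(t n + b)) atTop (nhds 1) := by
  have h1 : Tendsto (fun n => t n + b) atTop atTop :=
    tendsto_atTop_add_const_right _ b h
  have h2 : Tendsto (fun n => (a - b)/(t n + b)) atTop (nhds 0) :=
    Tendsto.div_atTop tendsto_const_nhds h1
  have h3 : Tendsto (fun n => 1 + (a - b)/(t n + b)) atTop (nhds 1) := by
    simpa using h2.const_add 1
  apply Tendsto.congr' _ h3
  filter_upwards [h1.eventually_gt_atTop 0] with n hn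
  field_simp
  ring

set_option maxHeartbeats 1600000 in
theorem statement12 (δ : ℝ) (hδ0 : 0 < δ) (hδ1 : δ < 1)
    (hsum : ∀ N : ℕ, 2 ≤ N → HasSum (fun k => pseq (1 - (N:ℝ)^(-δ)) k) 1) :
    Tendsto (fun N : ℕ =>
        (median δ N : ℝ) * Real.log 2 / Real.log (δ * Real.log N / Real.log 2))
      atTop (nhds 1) := by
  clear hsum hδ1
  have hlog2 : (0:ℝ) < Real.log 2 := Real.log_pos (by norm_num)
  -- limit of L = δ log N
  have hLtend : Tendsto (fun N : ℕ => δ * Real.log N) atTop atTop :=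
    Tendsto.const_mul_atTop hδ0 (Real.tendsto_log_atTop.comp tendsto_natCast_atTop_atTop)
  -- t = log L tends to infinity
  have ht : Tendsto (fun N : ℕ => Real.log (δ * Real.log N)) atTop atTop :=
    Real.tendsto_log_atTop.comp hLtend
  -- x = logb 2 L tends to infinity
  have hx : Tendsto (fun N : ℕ => Real.logb 2 (δ * Real.log N)) atTop atTop :=
    (Real.tendsto_logb_atTop (by norm_num : (1:ℝ) < 2)).comp hLtend
  -- eventual smallness facts
  have hμtend : Tendsto (fun N : ℕ => (N:ℝ)^(-δ)) atTop (nhds 0) :=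
    (tendsto_rpow_neg_atTop hδ0).comp tendsto_natCast_atTop_atTop
  have hE3' : Tendsto (fun N : ℕ => δ * (Real.log N / (N:ℝ)^(δ/2))) atTop (nhds 0) := by
    have := ((isLittleO_log_rpow_atTop (by linarith : (0:ℝ) < δ/2)).tendsto_div_nhds_zero).comp
      (tendsto_natCast_atTop_atTop (R := ℝ))
    simpa using (this.const_mul δ)
  have hmain : ∀ᶠ N : ℕ in atTop,
      Real.logb 2 (δ * Real.log N) - 2 ≤ (median δ N : ℝ) ∧
      (median δ N : ℝ) ≤ Real.logb 2 (δ * Real.log N) + 3 := by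
    filter_upwards [eventually_ge_atTop 3,
      hμtend.eventually (eventually_le_nhds (by norm_num : (0:ℝ) < 1/4)),
      hE3'.eventually (eventually_le_nhds (by norm_num : (0:ℝ) < 1)),
      hx.eventually_ge_atTop 3] with N hN3 hE2 hE3 hE4
    -- setup
    have hN1 : (1:ℝ) < (N:ℝ) := by
      have : (3:ℝ) ≤ (N:ℝ) := by exact_mod_cast hN3
      linarith
    have hN0 : (0:ℝ) < (N:ℝ) := by linarith
    set μ := (N:ℝ)^(-δ) with hμdef
    set ρ := 1 - μ with hρdef
    have hμ0 : 0 < μ := Real.rpow_pos_of_pos hN0 _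
    have hμ4 : μ ≤ 1/4 := hE2
    have hρ0 : 0 < ρ := by rw [hρdef]; linarith
    have hρ1 : ρ < 1 := by rw [hρdef]; linarith
    set L := δ * Real.log N with hLdef
    have hlogN : 0 < Real.log N := Real.log_pos hN1
    have hL0 : 0 < L := by positivity
    have hlogμ : Real.log μ = -L := by
      rw [hμdef, Real.log_rpow hN0, hLdef]; ring
    set x := Real.logb 2 L with hxdef
    have hx0 : (0:ℝ) ≤ x := by linarith
    have h2x : (2:ℝ) ^ x = L := Real.rpow_logb (by norm_num) (by norm_num) hL0
    -- the median as an inf over the partial sums w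
    have hset : {k : ℕ | 1/2 ≤ ∑ l ∈ Finset.range (k+1), pseq (1 - (N:ℝ)^(-δ)) l}
        = {k : ℕ | 1/2 ≤ (pAux ρ k).2} := by
      ext k; simp only [Set.mem_setOf_eq, sum_eq, hρdef, hμdef]
    have hmed : median δ N = sInf {k : ℕ | 1/2 ≤ (pAux ρ k).2} := by
      rw [median, hset]
    -- E3 in usable form : sqrt μ * L ≤ 1
    have hsqμL : Real.sqrt μ * L ≤ 1 := by
      have h1 : Real.sqrt μ = ((N:ℝ)^(δ/2))⁻¹ := by
        rw [hμdef, Real.sqrt_eq_rpow, ← Real.rpow_mul hN0.le, ← Real.rpow_neg hN0.le]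
        congr 1; ring
      rw [h1, hLdef]
      calc ((N:ℝ)^(δ/2))⁻¹ * (δ * Real.log N) = δ * (Real.log N / (N:ℝ)^(δ/2)) := by
            field_simp
        _ ≤ 1 := hE3
    ------------------------------------------------------------------
    -- upper bound on the median
    ------------------------------------------------------------------
    set kp : ℕ := ⌈x⌉₊ + 2 with hkp
    have h2kp : 4 * L ≤ (2:ℝ)^kp := by
      have h1 : (2:ℝ)^x ≤ (2:ℝ)^((⌈x⌉₊ : ℝ)) :=
        Real.rpow_le_rpow_of_exponent_le one_le_two (Nat.le_ceil x)
      have h2 : (2:ℝ)^((⌈x⌉₊:ℕ):ℝ) = (2:ℝ)^(⌈x⌉₊:ℕ) := Real.rpow_natCast 2 _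
      have h3 : ((2:ℝ))^kp = (2:ℝ)^(⌈x⌉₊:ℕ) * 4 := by
        rw [hkp, pow_add]; norm_num
      rw [h3]
      have h4 : L ≤ (2:ℝ)^(⌈x⌉₊:ℕ) :=
        h2x ▸ (h1.trans_eq h2)
      linarith
    have hwkp : 1/2 ≤ (pAux ρ kp).2 := by
      have hlow := w_low hρ0 hρ1 kp
      have hμρ : (1 - ρ) = μ := by rw [hρdef]; ring
      rw [hμρ] at hlow
      have hμe : μ ^ ((1/2:ℝ)^kp) = Real.exp (- (L / (2:ℝ)^kp)) := by
        rw [Real.rpow_def_of_pos hμ0, hlogμ]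
        congr 1
        rw [one_div, inv_pow, ← div_eq_mul_inv, neg_div]
      have h2kppos : (0:ℝ) < (2:ℝ)^kp := by positivity
      have hquarter : L / (2:ℝ)^kp ≤ 1/4 := by
        rw [div_le_iff₀ h2kppos]; nlinarith
      have hexp34 : (3/4:ℝ) ≤ Real.exp (- (L / (2:ℝ)^kp)) := by
        have := Real.add_one_le_exp (- (L / (2:ℝ)^kp))
        linarith
      rw [hμe] at hlow
      nlinarith [Real.exp_pos (- (L / (2:ℝ)^kp))]
    have hmem : kp ∈ {k : ℕ | 1/2 ≤ (pAux ρ k).2} := hwkp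
    have hup : median δ N ≤ kp := by rw [hmed]; exact Nat.sInf_le hmem
    have hupR : (median δ N : ℝ) ≤ x + 3 := by
      have h1 : (median δ N : ℝ) ≤ (kp : ℝ) := by exact_mod_cast hup
      have h2 : ((⌈x⌉₊ : ℕ) : ℝ) < x + 1 := Nat.ceil_lt_add_one hx0
      have h3 : (kp:ℝ) = (⌈x⌉₊:ℕ) + 2 := by rw [hkp]; push_cast; ring
      linarith
    ------------------------------------------------------------------
    -- lower bound on the median
    ------------------------------------------------------------------
    set km : ℕ := ⌊x⌋₊ - 2 with hkm
    have hfl3 : 3 ≤ ⌊x⌋₊ := Nat.le_floor (by exact_mod_cast hE4)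
    have hkmR : ((km:ℕ):ℝ) ≤ x - 2 := by
      have h1 : ((⌊x⌋₊:ℕ):ℝ) ≤ x := Nat.floor_le hx0
      have h2 : ((km:ℕ):ℝ) = ((⌊x⌋₊:ℕ):ℝ) - 2 := by
        rw [hkm]; push_cast [Nat.cast_sub (by omega : 2 ≤ ⌊x⌋₊)]; ring
      linarith
    have h2km : (2:ℝ)^km ≤ L/4 := by
      have h1 : (2:ℝ)^((km:ℕ):ℝ) ≤ (2:ℝ)^(x - 2) :=
        Real.rpow_le_rpow_of_exponent_le one_le_two hkmR
      have h2 : (2:ℝ)^((km:ℕ):ℝ) = (2:ℝ)^(km:ℕ) := Real.rpow_natCast 2 _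
      have h3 : (2:ℝ)^(x - 2) = L / 4 := by
        rw [Real.rpow_sub (by norm_num), h2x]
        norm_num
      rw [h2] at h1
      exact h1.trans_eq h3
    have h2kmpos : (0:ℝ) < (2:ℝ)^km := by positivity
    have hwkm : (pAux ρ km).2 < 1/2 := by
      have hhigh := w_high hρ0 hρ1 km
      have hμρ : (1 - ρ) = μ := by rw [hρdef]; ring
      rw [hμρ] at hhigh
      have hμe : μ ^ ((1/2:ℝ)^km) = Real.exp (- (L / (2:ℝ)^km)) := by
        rw [Real.rpow_def_of_pos hμ0, hlogμ]
        congr 1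
        rw [one_div, inv_pow, ← div_eq_mul_inv, neg_div]
      rw [hμe, ← Real.exp_add] at hhigh
      have hL4 : 4 ≤ L / (2:ℝ)^km := by
        rw [le_div_iff₀ h2kmpos]; linarith
      have harg : Real.sqrt μ * ((2:ℝ)^km - 1) ≤ 1 := by
        have h1 : Real.sqrt μ * ((2:ℝ)^km - 1) ≤ Real.sqrt μ * (2:ℝ)^km :=
          mul_le_mul_of_nonneg_left (by linarith) (Real.sqrt_nonneg μ)
        have h2 : Real.sqrt μ * (2:ℝ)^km ≤ Real.sqrt μ * (L/4) :=
          mul_le_mul_of_nonneg_left h2km (Real.sqrt_nonneg μ)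
        have h3 : Real.sqrt μ * (L/4) ≤ 1/4 := by
          have he : Real.sqrt μ * (L/4) = (Real.sqrt μ * L)/4 := by ring
          rw [he]; linarith
        linarith
      have hexparg : -(L / (2:ℝ)^km) + Real.sqrt μ * ((2:ℝ)^km - 1) ≤ -3 := by linarith
      have hexpbound : Real.exp (-(L / (2:ℝ)^km) + Real.sqrt μ * ((2:ℝ)^km - 1))
          ≤ Real.exp (-3 : ℝ) := Real.exp_le_exp.mpr hexparg
      have hexphalf : Real.exp (-3:ℝ) < 1/2 := by
        have h1 : Real.exp (-3:ℝ) ≤ Real.exp (-1:ℝ) := Real.exp_le_exp.mpr (by norm_num)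
        have h2 : (2:ℝ) ≤ Real.exp 1 := by
          have := Real.add_one_le_exp (1:ℝ); linarith
        have h3 : Real.exp (-1:ℝ) = (Real.exp 1)⁻¹ := by
          rw [Real.exp_neg]
        have : Real.exp (-1:ℝ) ≤ 1/2 := by
          rw [h3]
          rw [inv_le_comm₀ (Real.exp_pos 1) (by norm_num)]
          norm_num; linarith
        -- strictness
        have h4 : Real.exp (-3:ℝ) < Real.exp (-1:ℝ) := Real.exp_lt_exp.mpr (by norm_num)
        linarith
      linarith [hhigh]
    have hlowR : x - 2 ≤ (median δ N : ℝ) := by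
      have hne : {k : ℕ | 1/2 ≤ (pAux ρ k).2}.Nonempty := ⟨kp, hmem⟩
      have hminmem := Nat.sInf_mem hne
      have hkmlt : km < median δ N := by
        by_contra hcon
        push_neg at hcon
        have := w_mono hρ0.le hρ1.le hcon
        have h2 : 1/2 ≤ (pAux ρ (median δ N)).2 := by
          rw [hmed]; exact hminmem
        linarith
      have h1 : (km:ℝ) + 1 ≤ (median δ N : ℝ) := by exact_mod_cast hkmlt
      have h2 : ((km:ℕ):ℝ) = ((⌊x⌋₊:ℕ):ℝ) - 2 := by
        rw [hkm]; push_cast [Nat.cast_sub (by omega : 2 ≤ ⌊x⌋₊)]; ring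
      have h3 : x < ((⌊x⌋₊:ℕ):ℝ) + 1 := Nat.lt_floor_add_one x
      linarith
    exact ⟨hlowR, hupR⟩
  ------------------------------------------------------------------
  -- conclude the limit by squeezing
  ------------------------------------------------------------------
  set c0 : ℝ := - Real.log (Real.log 2) with hc0
  have hGev : ∀ᶠ N : ℕ in atTop,
      Real.log (δ * Real.log N / Real.log 2) = Real.log (δ * Real.log N) + c0 := by
    filter_upwards [hLtend.eventually_gt_atTop 0] with N hL0
    rw [Real.log_div hL0.ne' hlog2.ne', hc0]; ring
  have hlo : Tendsto (fun N : ℕ => (Real.log (δ * Real.log N) + (-(2*Real.log 2))) /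
      (Real.log (δ * Real.log N) + c0)) atTop (nhds 1) := aux_ratio _ _ ht
  have hhi : Tendsto (fun N : ℕ => (Real.log (δ * Real.log N) + 3*Real.log 2) /
      (Real.log (δ * Real.log N) + c0)) atTop (nhds 1) := aux_ratio _ _ ht
  have hc0pos : 0 < c0 := by
    rw [hc0, neg_pos]
    apply Real.log_neg hlog2
    linarith [Real.log_lt_sub_one_of_pos (by norm_num : (0:ℝ) < 2) (by norm_num : (2:ℝ) ≠ 1)]
  apply tendsto_of_tendsto_of_tendsto_of_le_of_le' hlo hhi
  · -- lower bound eventually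
    filter_upwards [hmain, hGev, ht.eventually_gt_atTop 0] with N hm hG htN
    rw [hG]
    have hGpos : 0 < Real.log (δ * Real.log N) + c0 := by linarith
    rw [div_le_div_iff_of_pos_right hGpos]
    have hxlog : Real.logb 2 (δ * Real.log N) * Real.log 2 = Real.log (δ * Real.log N) := by
      rw [Real.logb, div_mul_cancel₀ _ hlog2.ne']
    have h1 := mul_le_mul_of_nonneg_right hm.1 hlog2.le
    rw [sub_mul, hxlog] at h1
    linarith
  · -- upper bound eventually
    filter_upwards [hmain, hGev, ht.eventually_gt_atTop 0] with N hm hG htN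
    rw [hG]
    have hGpos : 0 < Real.log (δ * Real.log N) + c0 := by linarith
    rw [div_le_div_iff_of_pos_right hGpos]
    have hxlog : Real.logb 2 (δ * Real.log N) * Real.log 2 = Real.log (δ * Real.log N) := by
      rw [Real.logb, div_mul_cancel₀ _ hlog2.ne']
    have h1 := mul_le_mul_of_nonneg_right hm.2 hlog2.le
    rw [add_mul, hxlog] at h1
    linarith

end MullerRatchet12
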